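/- Let (A, α) be a unital C*-algebra with α a *-automorphism satisfying α² = id, and let φ : A → L(H₁) be an α-completely positive map on a Krein B-module (H₁, J₁). On the algebraic tensor product A ⊗ H₁, the sesquilinear form defined by ⟨a ⊗ ξ, b ⊗ η⟩ := ⟨ξ, φ(α(a)* b) η⟩ is positive semidefinite, i.e., for all n, a₁,…,aₙ ∈ A and ξ₁,…,ξₙ ∈ H₁, the element Σᵢ Σⱼ ⟨ξᵢ, φ(α(aᵢ)* aⱼ) ξⱼ⟩ of B is positive; consequently N_φ := {Σ aᵢ ⊗ ξᵢ : Σᵢ Σⱼ ⟨ξᵢ, φ(α(aᵢ)* aⱼ) ξⱼ⟩ = 0} is a linear subspace and the quotient carries a B-valued inner product. -/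

import Mathlib

/-- The Hilbert C⋆-module class as Mathlib defined `CStarModule` in December 2024:
a right `A`-module (action of `Aᵐᵒᵖ`) with an `A`-valued inner product. -/
class RightCStarModule (A : outParam <| Type*) (E : Type*) [NonUnitalSemiring A] [StarRing A]
    [Module ℂ A] [AddCommGroup E] [Module ℂ E] [PartialOrder A] [SMul Aᵐᵒᵖ E] [Norm A] [Norm E]
    extends Inner A E where
  inner_add_right {x} {y} {z} : inner x (y + z) = inner x y + inner x z
  inner_self_nonneg {x} : 0 ≤ inner x x
  inner_self {x} : inner x x = 0 ↔ x = 0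
  inner_op_smul_right {a : A} {x y : E} : inner x (MulOpposite.op a • y) = inner x y * a
  inner_smul_right_complex {z : ℂ} {x} {y} : inner x (z • y) = z • inner x y
  star_inner x y : star (inner x y) = inner y x
  norm_eq_sqrt_norm_inner_self x : ‖x‖ = √‖inner x x‖

private lemma inner_smul_left_aux {B H₁ : Type*} [CStarAlgebra B] [PartialOrder B]
    [StarOrderedRing B] [NormedAddCommGroup H₁] [NormedSpace ℂ H₁] [SMul Bᵐᵒᵖ H₁]
    [RightCStarModule B H₁] (z : ℂ) (x y : H₁) :
    (inner B (z • x) y : B) = star z • inner B x y := by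
  rw [← RightCStarModule.star_inner, RightCStarModule.inner_smul_right_complex, star_smul,
    RightCStarModule.star_inner]

private lemma rsmul_nonneg_aux {B : Type*} [CStarAlgebra B] [PartialOrder B]
    [StarOrderedRing B] (r : ℝ) (x : B) (hr : 0 ≤ r) (hx : 0 ≤ x) : 0 ≤ r • x := by
  have h1 : x = CFC.sqrt x * CFC.sqrt x := (CFC.sqrt_mul_sqrt_self x hx).symm
  have hs : IsSelfAdjoint (CFC.sqrt x) := IsSelfAdjoint.of_nonneg (CFC.sqrt_nonneg x)
  have : r • x = star (Real.sqrt r • CFC.sqrt x) * (Real.sqrt r • CFC.sqrt x) := by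
    rw [star_smul, star_trivial, hs.star_eq, smul_mul_smul_comm,
      Real.mul_self_sqrt hr, ← h1]
  rw [this]
  exact star_mul_self_nonneg _

private lemma smul_cancel_nonneg_aux {B : Type*} [CStarAlgebra B] [PartialOrder B]
    [StarOrderedRing B] (t : ℝ) (ht : 0 < t) (y : B) (h : 0 ≤ t • y) : 0 ≤ y := by
  have := rsmul_nonneg_aux t⁻¹ (t • y) (by positivity) h
  rwa [smul_smul, inv_mul_cancel₀ ht.ne', one_smul] at this

private lemma limit_nonneg_aux {B : Type*} [CStarAlgebra B] [PartialOrder B]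
    [StarOrderedRing B] (c d : B) (h : ∀ t : ℝ, 0 < t → 0 ≤ d + t • c) : 0 ≤ d := by
  have hcl : IsClosed {x : B | 0 ≤ x} := CStarAlgebra.isClosed_nonneg
  have htend : Filter.Tendsto (fun t : ℝ => d + t • c) (nhdsWithin 0 (Set.Ioi 0)) (nhds d) := by
    have : Filter.Tendsto (fun t : ℝ => d + t • c) (nhds 0) (nhds (d + (0:ℝ) • c)) :=
      Filter.Tendsto.const_add _ ((continuous_id.smul continuous_const).tendsto 0)
    simpa using this.mono_left nhdsWithin_le_nhds
  exact hcl.mem_of_tendsto htend (by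
    filter_upwards [self_mem_nhdsWithin] with t ht using h t ht)

/-- For an `α`-completely positive map `φ : A → L(H₁)` on a Krein `B`-module
`(H₁, J₁)`, the `B`-valued sesquilinear form
`⟨a ⊗ ξ, b ⊗ η⟩ = ⟨ξ, φ(α(a)* b) η⟩` on `A ⊗ H₁` is positive semidefinite
(evaluated on finite tuples), and any tuple with vanishing self-pairing pairs to
zero with every other tuple — so the null space is a subspace and the quotient
carries a `B`-valued inner product. -/
theorem alphaCP_form_positive_and_null
    {A B H₁ : Type*}
    [CStarAlgebra A] [PartialOrder A] [StarOrderedRing A]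
    [CStarAlgebra B] [PartialOrder B] [StarOrderedRing B]
    [NormedAddCommGroup H₁] [NormedSpace ℂ H₁] [SMul Bᵐᵒᵖ H₁] [RightCStarModule B H₁]
    (α : A ≃⋆ₐ[ℂ] A) (hα : ∀ a : A, α (α a) = a)
    (J₁ : H₁ →L[ℂ] H₁)
    (hJ₁sym : ∀ x y : H₁, (inner B (J₁ x) y : B) = inner B x (J₁ y))
    (hJ₁2 : ∀ x : H₁, J₁ (J₁ x) = x)
    (φ : A →ₗ[ℂ] H₁ →L[ℂ] H₁)
    (hφstar : ∀ (a : A) (ξ η : H₁),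
      (inner B (φ a ξ) η : B) = inner B ξ (φ (star a) η))
    (hφα : ∀ a : A, φ (α a) = φ a)
    (hφJ : ∀ (a : A) (ξ : H₁), J₁ (φ a (J₁ ξ)) = φ a ξ)
    -- condition (ii): positivity of the matrices `[φ(α(aᵢ)* aⱼ)]`
    (hpos : ∀ (n : ℕ) (a : Fin n → A) (ξ : Fin n → H₁),
      0 ≤ ∑ i, ∑ j, (inner B (ξ i) (φ (star (α (a i)) * a j) (ξ j)) : B)) :
    -- the form is positive semidefinite
    (∀ (n : ℕ) (a : Fin n → A) (ξ : Fin n → H₁),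
      0 ≤ ∑ i, ∑ j, (inner B (ξ i) (φ (star (α (a i)) * a j) (ξ j)) : B)) ∧
    -- null tuples are orthogonal to everything (so `N_φ` is a subspace and the
    -- quotient carries a `B`-valued inner product)
    (∀ (n m : ℕ) (a : Fin n → A) (ξ : Fin n → H₁) (b : Fin m → A) (η : Fin m → H₁),
      (∑ i, ∑ j, (inner B (ξ i) (φ (star (α (a i)) * a j) (ξ j)) : B)) = 0 →
      (∑ i, ∑ j, (inner B (ξ i) (φ (star (α (a i)) * b j) (η j)) : B)) = 0) := by
  refine ⟨hpos, fun n m a ξ b η hnull => ?_⟩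
  set Sxy : B := ∑ i, ∑ j, (inner B (ξ i) (φ (star (α (a i)) * b j) (η j)) : B) with hSxy
  set Syx : B := ∑ i, ∑ j, (inner B (η i) (φ (star (α (b i)) * a j) (ξ j)) : B) with hSyx
  set Syy : B := ∑ i, ∑ j, (inner B (η i) (φ (star (α (b i)) * b j) (η j)) : B) with hSyy
  have key : ∀ z : ℂ, 0 ≤ z • Sxy + star z • Syx + (star z * z) • Syy := by
    intro z
    have h := hpos (n + m) (Fin.append a b) (Fin.append ξ fun j => z • η j)
    simp only [Fin.sum_univ_add, Fin.append_left, Fin.append_right, map_smul,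
      inner_smul_left_aux, RightCStarModule.inner_smul_right_complex,
      smul_smul, Finset.smul_sum] at h
    rw [Finset.sum_add_distrib, Finset.sum_add_distrib, hnull, zero_add] at h
    simpa [hSxy, hSyx, hSyy, Finset.smul_sum, mul_comm, add_assoc] using h
  have main : ∀ w : ℂ, 0 ≤ w • Sxy + star w • Syx := by
    intro w
    apply limit_nonneg_aux ((star w * w) • Syy)
    intro t ht
    apply smul_cancel_nonneg_aux t ht
    have h := key ((t : ℂ) * w)
    have heq : ((t:ℂ) * w) • Sxy + star ((t:ℂ) * w) • Syx
        + (star ((t:ℂ) * w) * ((t:ℂ) * w)) • Syy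
        = t • (w • Sxy + star w • Syx + t • ((star w * w) • Syy)) := by
      simp only [star_mul', Complex.star_def, Complex.conj_ofReal]
      match_scalars <;> simp [Complex.coe_algebraMap] <;> ring
    rwa [heq] at h
  have h1 : 0 ≤ Sxy + Syx := by simpa using main 1
  have h2 : Sxy + Syx ≤ 0 := by
    have := main (-1)
    rw [neg_smul, one_smul, star_neg, star_one, neg_smul, one_smul,
      ← neg_add] at this
    exact neg_nonneg.mp this
  have hsum : Sxy + Syx = 0 := le_antisymm h2 h1
  have h3 : 0 ≤ Complex.I • (Sxy - Syx) := by
    have := main Complex.I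
    rw [Complex.star_def, Complex.conj_I, neg_smul, ← sub_eq_add_neg, ← smul_sub] at this
    exact this
  have h4 : Complex.I • (Sxy - Syx) ≤ 0 := by
    have := main (-Complex.I)
    rw [Complex.star_def, map_neg, Complex.conj_I, neg_neg, neg_smul,
      neg_add_eq_sub, ← smul_sub] at this
    rw [← neg_sub Sxy Syx, smul_neg] at this
    exact neg_nonneg.mp this
  have hdiff : Sxy - Syx = 0 := by
    have h0 : Complex.I • (Sxy - Syx) = 0 := le_antisymm h4 h3
    have := congrArg (fun x => (-Complex.I) • x) h0
    simpa [smul_smul, Complex.I_mul_I] using this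
  have : Sxy + Sxy = 0 := by
    have : Syx = Sxy := by linear_combination (norm := abel) -hdiff
    rw [this] at hsum; exact hsum
  calc Sxy = (2⁻¹ : ℂ) • (Sxy + Sxy) := by
        rw [← two_smul ℂ, smul_smul]; norm_num
    _ = 0 := by rw [this, smul_zero]
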